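/- arXiv:1604.02215 — 3 statements merged into one kernel-verified Lean document; each statement's English description precedes it below -/
import Mathlib

section
/- Let F be a free Borel flow on a standard Borel space X, and let S ⊆ ℝ^{>0} be a nonempty set bounded away from zero such that the subgroup ⟨S⟩ of (ℝ, +) generated by S equals λℤ for some λ > 0. Then F admits an S-regular cross section if and only if F admits a {λ}-regular cross section. -/
/-- A Borel flow: a Borel measurable action of `(ℝ, +)` on `X`. -/
structure BorelFlow (X : Type*) [MeasurableSpace X] where
  act : X → ℝ → X
  measurable : Measurable (Function.uncurry act)
  act_zero : ∀ x, act x 0 = x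
  act_add : ∀ x r s, act (act x r) s = act x (r + s)

namespace BorelFlow

variable {X : Type*} [MeasurableSpace X] (F : BorelFlow X)

/-- The flow is free if `x + r = x` implies `r = 0`. -/
def Free : Prop := ∀ x r, F.act x r = x → r = 0

/-- A cross section for the flow restricted to an invariant set `A`: a Borel subset
of `A` meeting every orbit in `A`, lacunary, and bi-infinite on every orbit. -/
def IsCrossSectionOn (A C : Set X) : Prop :=
  MeasurableSet C ∧ C ⊆ A ∧
  (∀ x ∈ A, ∃ r : ℝ, F.act x r ∈ C) ∧
  (∃ c > 0, ∀ x ∈ C, ∀ r > 0, F.act x r ∈ C → c ≤ r) ∧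
  (∀ x ∈ C, ¬ BddAbove {r : ℝ | F.act x r ∈ C} ∧ ¬ BddBelow {r : ℝ | F.act x r ∈ C})

/-- A cross section for the flow on the whole space. -/
def IsCrossSection (C : Set X) : Prop := F.IsCrossSectionOn Set.univ C

/-- The gap of `x ∈ C`: the least `r > 0` with `x + r ∈ C`. -/
noncomputable def gap (C : Set X) (x : X) : ℝ :=
  sInf {r : ℝ | 0 < r ∧ F.act x r ∈ C}

/-- The induced automorphism `φ_C` sending a point of `C` to the next one. -/
noncomputable def nextPoint (C : Set X) (x : X) : X := F.act x (F.gap C x)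

/-- The gap to the previous point of the cross section. -/
noncomputable def prevGap (C : Set X) (x : X) : ℝ :=
  sInf {r : ℝ | 0 < r ∧ F.act x (-r) ∈ C}

/-- The inverse of the induced automorphism: the previous point of the cross section. -/
noncomputable def prevPoint (C : Set X) (x : X) : X := F.act x (-(F.prevGap C x))

/-- `C` is an `S`-regular cross section on `A`: all gaps belong to `S`. -/
def SRegularOn (A C : Set X) (S : Set ℝ) : Prop :=
  F.IsCrossSectionOn A C ∧ ∀ x ∈ C, F.gap C x ∈ S

/-- `C` is an `S`-regular cross section: all gaps belong to `S`. -/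
def SRegular (C : Set X) (S : Set ℝ) : Prop := F.SRegularOn Set.univ C S

/-- A cross section on `A` with gaps unbounded in both directions along every orbit. -/
def SparseSectionOn (A C : Set X) : Prop :=
  F.IsCrossSectionOn A C ∧ ∀ x ∈ C, ∀ K > 0,
    (∃ n : ℕ, 0 < n ∧ K < F.gap C ((F.nextPoint C)^[n] x)) ∧
    (∃ m : ℕ, 0 < m ∧ K < F.gap C ((F.prevPoint C)^[m] x))

/-- The flow restricted to `A` is sparse. -/
def SparseOn (A : Set X) : Prop := ∃ C, F.SparseSectionOn A C

/-- The flow is sparse. -/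
def Sparse : Prop := F.SparseOn Set.univ

/-- A flow-invariant set. -/
def Invariant (A : Set X) : Prop := ∀ x ∈ A, ∀ r : ℝ, F.act x r ∈ A

end BorelFlow
namespace SRegAux

open BorelFlow Set

variable {X : Type*} [MeasurableSpace X]

/-- The time-reversed flow. -/
def rev (F : BorelFlow X) : BorelFlow X where
  act x r := F.act x (-r)
  measurable := by
    have h : (Function.uncurry fun (x : X) (r : ℝ) => F.act x (-r)) =
        (Function.uncurry F.act) ∘ (fun p : X × ℝ => (p.1, -p.2)) := rfl
    rw [h]
    exact F.measurable.comp (measurable_fst.prodMk measurable_snd.neg)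
  act_zero x := by simp [F.act_zero]
  act_add x r s := by
    show F.act (F.act x (-r)) (-s) = F.act x (-(r+s))
    rw [F.act_add]; congr 1; ring

theorem rev_act (F : BorelFlow X) (x : X) (r : ℝ) : (rev F).act x r = F.act x (-r) := rfl

theorem measurable_act_const (F : BorelFlow X) (t : ℝ) :
    Measurable (fun y : X => F.act y t) :=
  F.measurable.comp (measurable_id.prodMk measurable_const)

/-- Lacunarity of `C` transfers to the reversed flow. -/
theorem rev_lac (F : BorelFlow X) {C : Set X} {c : ℝ}
    (hlac : ∀ x ∈ C, ∀ r > 0, F.act x r ∈ C → c ≤ r) :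
    ∀ x ∈ C, ∀ r > 0, (rev F).act x r ∈ C → c ≤ r := by
  intro x hx r hr hm
  rw [rev_act] at hm
  have h2 : F.act (F.act x (-r)) r = x := by
    rw [F.act_add]; simp [F.act_zero]
  exact hlac _ hm r hr (by rw [h2]; exact hx)

/-- L1: in a lacunary set the infimum of the positive hitting times is attained. -/
theorem isLeast_gapSet (F : BorelFlow X) {C : Set X} {c : ℝ} (hc : 0 < c)
    (hlac : ∀ x ∈ C, ∀ r > 0, F.act x r ∈ C → c ≤ r)
    (x : X) (hne : {r : ℝ | 0 < r ∧ F.act x r ∈ C}.Nonempty) :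
    IsLeast {r : ℝ | 0 < r ∧ F.act x r ∈ C} (sInf {r : ℝ | 0 < r ∧ F.act x r ∈ C}) := by
  set R := {r : ℝ | 0 < r ∧ F.act x r ∈ C} with hR
  have hbdd : BddBelow R := ⟨0, fun r hr => le_of_lt hr.1⟩
  obtain ⟨r₁, hr₁, hr₁lt⟩ : ∃ r₁ ∈ R, r₁ < sInf R + c/2 :=
    exists_lt_of_csInf_lt hne (by linarith)
  have heq : r₁ = sInf R := by
    by_contra hne'
    have hlt : sInf R < r₁ := lt_of_le_of_ne (csInf_le hbdd hr₁) (Ne.symm hne')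
    obtain ⟨r₂, hr₂, hr₂lt⟩ : ∃ r₂ ∈ R, r₂ < r₁ := exists_lt_of_csInf_lt hne hlt
    have h21 : F.act (F.act x r₂) (r₁ - r₂) = F.act x r₁ := by
      rw [F.act_add]; congr 1; ring
    have := hlac _ hr₂.2 (r₁ - r₂) (by linarith) (by rw [h21]; exact hr₁.2)
    have h2i : sInf R ≤ r₂ := csInf_le hbdd hr₂
    linarith
  exact ⟨heq ▸ hr₁, fun b hb => csInf_le hbdd hb⟩

end SRegAux
namespace SRegAux

variable {X : Type*} [MeasurableSpace X]

/-- For a point of a cross section the set of positive hitting times is nonempty. -/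
theorem pos_hit_nonempty (F : BorelFlow X) {C : Set X} {x : X}
    (h : ¬ BddAbove {r : ℝ | F.act x r ∈ C}) :
    {r : ℝ | 0 < r ∧ F.act x r ∈ C}.Nonempty := by
  obtain ⟨r, hr, hr0⟩ := not_bddAbove_iff.1 h 0
  exact ⟨r, hr0, hr⟩

theorem neg_hit_nonempty (F : BorelFlow X) {C : Set X} {x : X}
    (h : ¬ BddBelow {r : ℝ | F.act x r ∈ C}) :
    {r : ℝ | 0 < r ∧ F.act x (-r) ∈ C}.Nonempty := by
  obtain ⟨r, hr, hr0⟩ := not_bddBelow_iff.1 h 0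
  exact ⟨-r, by linarith, by simpa using hr⟩

/-- The gap of a point of a lacunary, upward-unbounded set is attained. -/
theorem gap_isLeast (F : BorelFlow X) {C : Set X} {c : ℝ} (hc : 0 < c)
    (hlac : ∀ x ∈ C, ∀ r > 0, F.act x r ∈ C → c ≤ r)
    {x : X} (h : ¬ BddAbove {r : ℝ | F.act x r ∈ C}) :
    IsLeast {r : ℝ | 0 < r ∧ F.act x r ∈ C} (F.gap C x) :=
  isLeast_gapSet F hc hlac x (pos_hit_nonempty F h)

/-- A `{lam}`-regular cross section is closed under the translation by `lam`. -/
theorem step_fwd (F : BorelFlow X) {C : Set X} {lam c : ℝ} (hc : 0 < c)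
    (hlac : ∀ x ∈ C, ∀ r > 0, F.act x r ∈ C → c ≤ r)
    (hbi : ∀ x ∈ C, ¬ BddAbove {r : ℝ | F.act x r ∈ C} ∧ ¬ BddBelow {r : ℝ | F.act x r ∈ C})
    (hreg : ∀ x ∈ C, F.gap C x = lam) {x : X} (hx : x ∈ C) : F.act x lam ∈ C := by
  have h := gap_isLeast F hc hlac (hbi x hx).1
  rw [hreg x hx] at h
  exact h.1.2

/-- A `{lam}`-regular cross section is closed under the translation by `-lam`. -/
theorem step_bwd (F : BorelFlow X) {C : Set X} {lam c : ℝ} (hc : 0 < c)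
    (hlac : ∀ x ∈ C, ∀ r > 0, F.act x r ∈ C → c ≤ r)
    (hbi : ∀ x ∈ C, ¬ BddAbove {r : ℝ | F.act x r ∈ C} ∧ ¬ BddBelow {r : ℝ | F.act x r ∈ C})
    (hreg : ∀ x ∈ C, F.gap C x = lam) {x : X} (hx : x ∈ C) : F.act x (-lam) ∈ C := by
  set Rrev := {r : ℝ | 0 < r ∧ F.act x (-r) ∈ C} with hRrev
  have hne : Rrev.Nonempty := neg_hit_nonempty F (hbi x hx).2
  have hrevlac := rev_lac F hlac
  have hIL : IsLeast Rrev (sInf Rrev) := isLeast_gapSet (rev F) hc hrevlac x hne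
  set m := sInf Rrev with hm
  have hmpos : 0 < m := hIL.1.1
  have hp : F.act x (-m) ∈ C := hIL.1.2
  have hpx : F.act (F.act x (-m)) m = x := by rw [F.act_add]; simp [F.act_zero]
  -- the gap of p := F.act x (-m) is m
  have hgp : IsLeast {r : ℝ | 0 < r ∧ F.act (F.act x (-m)) r ∈ C} m := by
    constructor
    · exact ⟨hmpos, by rw [hpx]; exact hx⟩
    · intro r hr
      by_contra hlt
      push_neg at hlt
      have h1 : F.act (F.act x (-m)) r = F.act x (-(m - r)) := by
        rw [F.act_add]; congr 1; ring
      have h2 : m - r ∈ Rrev := ⟨by linarith, by rw [← h1]; exact hr.2⟩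
      have := hIL.2 h2
      linarith [hr.1]
  have hml : m = lam := by rw [← hreg _ hp, BorelFlow.gap, hgp.csInf_eq]
  rw [← hml]; exact hp

/-- A `{lam}`-regular cross section is closed under all integer translates of `lam`. -/
theorem lam_closed (F : BorelFlow X) {C : Set X} {lam c : ℝ} (hc : 0 < c)
    (hlac : ∀ x ∈ C, ∀ r > 0, F.act x r ∈ C → c ≤ r)
    (hbi : ∀ x ∈ C, ¬ BddAbove {r : ℝ | F.act x r ∈ C} ∧ ¬ BddBelow {r : ℝ | F.act x r ∈ C})
    (hreg : ∀ x ∈ C, F.gap C x = lam) {x : X} (hx : x ∈ C) :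
    ∀ k : ℤ, F.act x ((k : ℝ) * lam) ∈ C := by
  intro k
  induction k using Int.induction_on with
  | zero => simpa [F.act_zero] using hx
  | succ k ih =>
      have h := step_fwd F hc hlac hbi hreg ih
      rw [F.act_add] at h
      convert h using 2
      push_cast; ring
  | pred k ih =>
      have h := step_bwd F hc hlac hbi hreg ih
      rw [F.act_add] at h
      convert h using 2
      push_cast; ring

/-- L3 auxiliary: bounded version by induction. -/
theorem diff_int_aux (F : BorelFlow X) {C : Set X} {lam c : ℝ} (hc : 0 < c)
    (hlac : ∀ x ∈ C, ∀ r > 0, F.act x r ∈ C → c ≤ r)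
    (hmul : ∀ x ∈ C, ∃ k : ℤ, F.gap C x = (k : ℝ) * lam) :
    ∀ n : ℕ, ∀ x ∈ C, ∀ r : ℝ, 0 ≤ r → r ≤ n * c → F.act x r ∈ C →
      ∃ k : ℤ, r = (k : ℝ) * lam := by
  intro n
  induction n with
  | zero =>
      intro x hx r h0 hle _
      have : r = 0 := le_antisymm (by simpa using hle) h0
      exact ⟨0, by simp [this]⟩
  | succ n ih =>
      intro x hx r h0 hle hmem
      rcases eq_or_lt_of_le h0 with h | h
      · exact ⟨0, by simp [← h]⟩
      · have hne : {s : ℝ | 0 < s ∧ F.act x s ∈ C}.Nonempty := ⟨r, h, hmem⟩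
        have hIL := isLeast_gapSet F hc hlac x hne
        set g := sInf {s : ℝ | 0 < s ∧ F.act x s ∈ C} with hg
        have hgr : g ≤ r := hIL.2 ⟨h, hmem⟩
        have hgpos : 0 < g := hIL.1.1
        have hgmem : F.act x g ∈ C := hIL.1.2
        have hcg : c ≤ g := hlac x hx g hgpos hgmem
        obtain ⟨kg, hkg⟩ := hmul x hx
        have hgeq : g = (kg : ℝ) * lam := by rw [← hkg]; rfl
        have hnext : F.act (F.act x g) (r - g) = F.act x r := by
          rw [F.act_add]; congr 1; ring
        have hrg : r - g ≤ n * c := by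
          have : r ≤ (n + 1) * c := by push_cast at hle ⊢; linarith
          linarith
        obtain ⟨k', hk'⟩ := ih (F.act x g) hgmem (r - g) (by linarith)
          hrg (by rw [hnext]; exact hmem)
        exact ⟨kg + k', by push_cast; linarith⟩

/-- L3: in a cross section all of whose gaps are integer multiples of `lam`, any two
points of the section on the same orbit differ by an integer multiple of `lam`. -/
theorem diff_int (F : BorelFlow X) {C : Set X} {lam c : ℝ} (hc : 0 < c)
    (hlac : ∀ x ∈ C, ∀ r > 0, F.act x r ∈ C → c ≤ r)
    (hmul : ∀ x ∈ C, ∃ k : ℤ, F.gap C x = (k : ℝ) * lam) :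
    ∀ x ∈ C, ∀ r : ℝ, F.act x r ∈ C → ∃ k : ℤ, r = (k : ℝ) * lam := by
  have main : ∀ x ∈ C, ∀ r : ℝ, 0 ≤ r → F.act x r ∈ C → ∃ k : ℤ, r = (k : ℝ) * lam := by
    intro x hx r h0 hmem
    obtain ⟨n, hn⟩ := exists_nat_ge (r / c)
    have hrc : r ≤ n * c := by
      rw [div_le_iff₀ hc] at hn; linarith
    exact diff_int_aux F hc hlac hmul n x hx r h0 hrc hmem
  intro x hx r hmem
  rcases le_or_gt 0 r with h | h
  · exact main x hx r h hmem
  · have hback : F.act (F.act x r) (-r) = x := by rw [F.act_add]; simp [F.act_zero]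
    obtain ⟨k, hk⟩ := main (F.act x r) hmem (-r) (by linarith) (by rw [hback]; exact hx)
    exact ⟨-k, by push_cast; linarith⟩

end SRegAux
namespace SRegAux

open Set

variable {X : Type*} [MeasurableSpace X]

/-- The λℤ-saturation of a set. -/
def sat (F : BorelFlow X) (C : Set X) (lam : ℝ) : Set X :=
  ⋃ k : ℤ, (fun y => F.act y ((k : ℝ) * lam)) ⁻¹' C

theorem mem_sat {F : BorelFlow X} {C : Set X} {lam : ℝ} {y : X} :
    y ∈ sat F C lam ↔ ∃ k : ℤ, F.act y ((k : ℝ) * lam) ∈ C := by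
  simp [sat]

theorem sat_shift {F : BorelFlow X} {C : Set X} {lam : ℝ} {y : X}
    (hy : y ∈ sat F C lam) (m : ℤ) : F.act y ((m : ℝ) * lam) ∈ sat F C lam := by
  obtain ⟨k, hk⟩ := mem_sat.1 hy
  refine mem_sat.2 ⟨k - m, ?_⟩
  rw [F.act_add]
  convert hk using 2
  push_cast; ring

/-- Forward direction: an `S`-regular section with `S ⊆ lamℤ` yields a `{lam}`-regular one. -/
theorem forward (F : BorelFlow X) {C : Set X} {S : Set ℝ} {lam : ℝ} (hlam : 0 < lam)
    (h : F.SRegular C S) (hS : ∀ s ∈ S, ∃ k : ℤ, s = (k : ℝ) * lam) :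
    F.SRegular (sat F C lam) {lam} := by
  obtain ⟨⟨hmeas, -, hcover, ⟨c, hc, hlac⟩, hbi⟩, hgap⟩ := h
  have hmul : ∀ x ∈ C, ∃ k : ℤ, F.gap C x = (k : ℝ) * lam := fun x hx => hS _ (hgap x hx)
  have hdiff := diff_int F hc hlac hmul
  set D := sat F C lam with hD
  -- any two points of D on an orbit differ by a multiple of lam
  have hDdiff : ∀ y ∈ D, ∀ r : ℝ, F.act y r ∈ D → ∃ k : ℤ, r = (k : ℝ) * lam := by
    intro y hy r hr
    obtain ⟨k₁, hk₁⟩ := mem_sat.1 hy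
    obtain ⟨k₂, hk₂⟩ := mem_sat.1 hr
    rw [F.act_add] at hk₂
    have heq : F.act (F.act y ((k₁ : ℝ) * lam)) (r + (k₂ : ℝ) * lam - (k₁ : ℝ) * lam)
        = F.act y (r + (k₂ : ℝ) * lam) := by
      rw [F.act_add]; congr 1; ring
    obtain ⟨k, hk⟩ := hdiff _ hk₁ _ (by rw [heq]; exact hk₂)
    exact ⟨k - k₂ + k₁, by push_cast; linarith⟩
  have hlam_mem : ∀ y ∈ D, F.act y lam ∈ D := by
    intro y hy
    have := sat_shift hy 1
    simpa using this
  have hDlac : ∀ y ∈ D, ∀ r > 0, F.act y r ∈ D → lam ≤ r := by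
    intro y hy r hr hmem
    obtain ⟨k, hk⟩ := hDdiff y hy r hmem
    have hk1 : (1 : ℤ) ≤ k := by
      by_contra hcon
      push_neg at hcon
      have : (k : ℝ) ≤ 0 := by exact_mod_cast Int.lt_add_one_iff.mp (by omega : k < 0 + 1)
      nlinarith
    have : (1 : ℝ) ≤ (k : ℝ) := by exact_mod_cast hk1
    nlinarith
  constructor
  · refine ⟨MeasurableSet.iUnion fun k => (measurable_act_const F _) hmeas,
      subset_univ _, ?_, ⟨lam, hlam, hDlac⟩, ?_⟩
    · intro x hx
      obtain ⟨r, hr⟩ := hcover x hx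
      refine ⟨r, mem_sat.2 ⟨0, ?_⟩⟩
      simpa [F.act_zero] using hr
    · intro y hy
      constructor
      · intro ⟨b, hb⟩
        obtain ⟨n, hn⟩ := exists_nat_gt (b / lam)
        have hmemn : F.act y ((n : ℝ) * lam) ∈ D := by
          have := sat_shift hy n; push_cast at this ⊢; exact this
        have := hb hmemn
        rw [div_lt_iff₀ hlam] at hn
        linarith
      · intro ⟨b, hb⟩
        obtain ⟨n, hn⟩ := exists_nat_gt (-b / lam)
        have hmemn : F.act y (((-n : ℤ) : ℝ) * lam) ∈ D := sat_shift hy (-n)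
        have := hb hmemn
        rw [div_lt_iff₀ hlam] at hn
        push_cast at this
        linarith
  · intro y hy
    have hleast : IsLeast {r : ℝ | 0 < r ∧ F.act y r ∈ D} lam :=
      ⟨⟨hlam, hlam_mem y hy⟩, fun r hr => hDlac y hy r hr.1 hr.2⟩
    have : F.gap D y = lam := hleast.csInf_eq
    simpa using this

end SRegAux
namespace SRegAux

open Set

/-- The set of integer multipliers realizing `S` as multiples of `lam`. -/
def Tset (S : Set ℝ) (lam : ℝ) : Set ℤ := {n : ℤ | (n : ℝ) * lam ∈ S}

theorem Tset_pos {S : Set ℝ} {lam : ℝ} (hpos : S ⊆ Set.Ioi (0 : ℝ)) (hlam : 0 < lam)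
    {n : ℤ} (hn : n ∈ Tset S lam) : 1 ≤ n := by
  have h : (0 : ℝ) < (n : ℝ) * lam := hpos hn
  by_contra hc
  push_neg at hc
  have : (n : ℝ) ≤ 0 := by exact_mod_cast (by omega : n ≤ 0)
  nlinarith

theorem one_mem_closure_Tset {S : Set ℝ} {lam : ℝ} (hlam : 0 < lam)
    (hgen : AddSubgroup.closure S = AddSubgroup.zmultiples lam) :
    (1 : ℤ) ∈ AddSubgroup.closure (Tset S lam) := by
  set φ : ℤ →+ ℝ := zmultiplesHom ℝ lam with hφ
  have hφapp : ∀ n : ℤ, φ n = (n : ℝ) * lam := by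
    intro n; simp [hφ, zmultiplesHom_apply, zsmul_eq_mul]
  have himg : φ '' (Tset S lam) = S := by
    ext s
    constructor
    · rintro ⟨n, hn, rfl⟩
      rw [hφapp]; exact hn
    · intro hs
      have : s ∈ AddSubgroup.zmultiples lam := hgen ▸ AddSubgroup.subset_closure hs
      obtain ⟨n, hn⟩ := AddSubgroup.mem_zmultiples_iff.1 this
      refine ⟨n, ?_, ?_⟩
      · show (n : ℝ) * lam ∈ S
        rw [← zsmul_eq_mul, hn]; exact hs
      · rw [hφapp, ← zsmul_eq_mul, hn]
  have hmap : (AddSubgroup.closure (Tset S lam)).map φ = AddSubgroup.zmultiples lam := by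
    rw [AddMonoidHom.map_closure, himg, hgen]
  have hlmem : lam ∈ (AddSubgroup.closure (Tset S lam)).map φ := by
    rw [hmap]; exact AddSubgroup.mem_zmultiples lam
  obtain ⟨m, hm, hmeq⟩ := hlmem
  have : (m : ℝ) * lam = lam := by rw [← hφapp m, hmeq]
  have hm1 : (m : ℝ) = 1 := by
    have h2 : (m : ℝ) * lam = 1 * lam := by rw [this]; ring
    exact mul_right_cancel₀ (ne_of_gt hlam) h2
  have : m = 1 := by exact_mod_cast hm1
  exact this ▸ hm

/-- Every element of the subgroup closure is a difference of two monoid-closure elements. -/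
theorem sub_of_mem_closure {T : Set ℤ} {x : ℤ} (hx : x ∈ AddSubgroup.closure T) :
    ∃ a b : ℤ, a ∈ AddSubmonoid.closure T ∧ b ∈ AddSubmonoid.closure T ∧ x = a - b := by
  induction hx using AddSubgroup.closure_induction with
  | mem y hy => exact ⟨y, 0, AddSubmonoid.subset_closure hy, AddSubmonoid.zero_mem _, by ring⟩
  | zero => exact ⟨0, 0, AddSubmonoid.zero_mem _, AddSubmonoid.zero_mem _, by ring⟩
  | add y z hy hz ihy ihz =>
      obtain ⟨a, b, ha, hb, rfl⟩ := ihy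
      obtain ⟨a', b', ha', hb', rfl⟩ := ihz
      exact ⟨a + a', b + b', AddSubmonoid.add_mem _ ha ha', AddSubmonoid.add_mem _ hb hb',
        by ring⟩
  | neg y hy ihy =>
      obtain ⟨a, b, ha, hb, rfl⟩ := ihy
      exact ⟨b, a, hb, ha, by ring⟩

/-- Numerical-semigroup bound: all sufficiently large naturals are sums of elements
of `Tset S lam`. -/
theorem exists_rep_bound {S : Set ℝ} {lam : ℝ} (hpos : S ⊆ Set.Ioi (0 : ℝ)) (hlam : 0 < lam)
    (hgen : AddSubgroup.closure S = AddSubgroup.zmultiples lam) :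
    ∃ B : ℕ, ∀ d : ℕ, B ≤ d →
      ∃ l : List ℤ, (∀ y ∈ l, y ∈ Tset S lam) ∧ l.sum = (d : ℤ) := by
  obtain ⟨a, b, ha, hb, hab⟩ := sub_of_mem_closure (one_mem_closure_Tset hlam hgen)
  obtain ⟨la, hla, hlasum⟩ := AddSubmonoid.exists_list_of_mem_closure ha
  obtain ⟨lb, hlb, hlbsum⟩ := AddSubmonoid.exists_list_of_mem_closure hb
  have hbnn : 0 ≤ b := by
    rw [← hlbsum]
    apply List.sum_nonneg
    intro y hy
    exact le_trans (by norm_num) (Tset_pos hpos hlam (hlb y hy))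
  set Q : ℕ := b.toNat with hQ
  have hQb : (Q : ℤ) = b := Int.toNat_of_nonneg hbnn
  have hasum : a = b + 1 := by omega
  refine ⟨Q * Q, fun d hd => ?_⟩
  rcases Nat.eq_zero_or_pos Q with hQ0 | hQpos
  · -- b = 0, a = 1: d copies of la
    refine ⟨(List.replicate d la).flatten, ?_, ?_⟩
    · intro y hy
      rw [List.mem_flatten] at hy
      obtain ⟨l', hl', hyl'⟩ := hy
      rw [List.mem_replicate] at hl'
      exact hla y (hl'.2 ▸ hyl')
    · rw [List.sum_flatten]
      have : (List.replicate d la).map List.sum = List.replicate d a := by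
        rw [List.map_replicate, hlasum]
      rw [this, List.sum_replicate]
      have hb0 : b = 0 := by omega
      have ha1 : a = 1 := by omega
      simp [ha1]
  · -- Q ≥ 1
    set cq : ℕ := d / Q with hcq
    set rq : ℕ := d % Q with hrq
    have hdeq : d = Q * cq + rq := (Nat.div_add_mod d Q).symm
    have hrqlt : rq < Q := Nat.mod_lt d hQpos
    have hcqge : Q ≤ cq := by
      rw [hcq]
      exact (Nat.le_div_iff_mul_le hQpos).2 hd
    have hrqcq : rq ≤ cq := le_trans (le_of_lt hrqlt) hcqge
    refine ⟨(List.replicate rq la ++ List.replicate (cq - rq) lb).flatten, ?_, ?_⟩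
    · intro y hy
      rw [List.mem_flatten] at hy
      obtain ⟨l', hl', hyl'⟩ := hy
      rw [List.mem_append] at hl'
      rcases hl' with h | h
      · rw [List.mem_replicate] at h
        exact hla y (h.2 ▸ hyl')
      · rw [List.mem_replicate] at h
        exact hlb y (h.2 ▸ hyl')
    · rw [List.sum_flatten, List.map_append, List.sum_append,
        List.map_replicate, List.map_replicate, hlasum, hlbsum,
        List.sum_replicate, List.sum_replicate]
      have h1 : (rq : ℤ) • a + ((cq - rq : ℕ) : ℤ) • b = (d : ℤ) := by
        rw [smul_eq_mul, smul_eq_mul]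
        have hc : ((cq - rq : ℕ) : ℤ) = (cq : ℤ) - rq := by
          push_cast [Nat.cast_sub hrqcq]; ring
        rw [hc, hasum]
        have hid : (d : ℤ) = (Q : ℤ) * cq + rq := by exact_mod_cast congrArg (fun n : ℕ => (n : ℤ)) hdeq
        rw [hid, hQb]; ring
      exact h1

end SRegAux
namespace SRegAux

theorem ps_nonneg (l : List ℤ) (hl : ∀ y ∈ l, (1 : ℤ) ≤ y) (m : ℕ) :
    0 ≤ (l.take m).sum :=
  List.sum_nonneg fun y hy =>
    le_trans (by norm_num) (hl y (List.take_subset m l hy))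

theorem ps_le_sum (l : List ℤ) (hl : ∀ y ∈ l, (1 : ℤ) ≤ y) (m : ℕ) :
    (l.take m).sum ≤ l.sum := by
  conv_rhs => rw [← List.take_append_drop m l]
  rw [List.sum_append]
  have h0 : 0 ≤ (l.drop m).sum :=
    List.sum_nonneg fun y hy => le_trans (by norm_num) (hl y (List.drop_subset m l hy))
  linarith

theorem ps_mono (l : List ℤ) (hl : ∀ y ∈ l, (1 : ℤ) ≤ y) {m m' : ℕ} (h : m ≤ m') :
    (l.take m).sum ≤ (l.take m').sum := by
  have heq : l.take m = (l.take m').take m := by rw [List.take_take, min_eq_left h]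
  rw [heq]
  exact ps_le_sum (l.take m') (fun y hy => hl y (List.take_subset _ _ hy)) m

theorem exists_next_off (l : List ℤ) (hl : ∀ y ∈ l, (1 : ℤ) ≤ y) {j : ℤ}
    (hj : j ∈ Set.range (fun m : ℕ => (l.take m).sum)) (hlt : j < l.sum) :
    ∃ a : ℤ, a ∈ l ∧ (j + a) ∈ Set.range (fun m : ℕ => (l.take m).sum) ∧
      ∀ m' : ℕ, j < (l.take m').sum → j + a ≤ (l.take m').sum := by
  obtain ⟨m, hm⟩ := hj
  simp only at hm
  have hmlen : m < l.length := by
    by_contra h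
    push_neg at h
    rw [List.take_of_length_le h] at hm
    omega
  refine ⟨l[m], List.getElem_mem hmlen, ⟨m + 1, ?_⟩, ?_⟩
  · simp only
    rw [List.sum_take_succ l m hmlen, hm]
  · intro m' hm'
    have hmm' : m + 1 ≤ m' := by
      by_contra h
      push_neg at h
      have := ps_mono l hl (by omega : m' ≤ m)
      omega
    have h2 := ps_mono l hl hmm'
    rw [List.sum_take_succ l m hmlen, hm] at h2
    exact h2

open Classical in
/-- A canonical representation of `d` as an ordered sum of elements of `Tset S lam`. -/
noncomputable def rep (S : Set ℝ) (lam : ℝ) (d : ℕ) : List ℤ :=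
  if h : ∃ l : List ℤ, (∀ y ∈ l, y ∈ Tset S lam) ∧ l.sum = (d : ℤ) then h.choose else []

theorem rep_spec {S : Set ℝ} {lam : ℝ} {d : ℕ}
    (h : ∃ l : List ℤ, (∀ y ∈ l, y ∈ Tset S lam) ∧ l.sum = (d : ℤ)) :
    (∀ y ∈ rep S lam d, y ∈ Tset S lam) ∧ (rep S lam d).sum = (d : ℤ) := by
  classical
  rw [rep, dif_pos h]
  exact h.choose_spec

/-- Offsets: the partial sums of the canonical representation. -/
def offs (S : Set ℝ) (lam : ℝ) (d : ℕ) : Set ℤ :=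
  Set.range (fun m : ℕ => ((rep S lam d).take m).sum)

theorem zero_mem_offs (S : Set ℝ) (lam : ℝ) (d : ℕ) : (0 : ℤ) ∈ offs S lam d :=
  ⟨0, by simp⟩

end SRegAux
namespace SRegAux

open Set

/-- The `i`-th rational interval. -/
def ival (i : ℕ) : Set ℝ :=
  Set.Ioo ((Denumerable.ofNat (ℚ × ℚ) i).1 : ℝ) ((Denumerable.ofNat (ℚ × ℚ) i).2 : ℝ)

theorem ival_measurable (i : ℕ) : MeasurableSet (ival i) := measurableSet_Ioo

theorem finset_sep (G : Finset ℝ) (t : ℝ) (h : ∀ u ∈ G, u ≠ t) :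
    ∃ ε > 0, ∀ u ∈ G, ε ≤ |u - t| := by
  rcases G.eq_empty_or_nonempty with rfl | hne
  · exact ⟨1, one_pos, by simp⟩
  · set G' := G.image (fun u => |u - t|) with hG'
    have hne' : G'.Nonempty := hne.image _
    refine ⟨G'.min' hne', ?_, ?_⟩
    · obtain ⟨u, hu, he⟩ := Finset.mem_image.1 (G'.min'_mem hne')
      rw [← he]
      exact abs_pos.2 (sub_ne_zero.2 (h u hu))
    · intro u hu
      exact G'.min'_le _ (Finset.mem_image_of_mem _ hu)

theorem exists_ival (t : ℝ) (G : Finset ℝ) (h : ∀ u ∈ G, u ≠ t) :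
    ∃ i : ℕ, t ∈ ival i ∧ ∀ u ∈ G, u ∉ ival i := by
  obtain ⟨ε, hε, hsep⟩ := finset_sep G t h
  obtain ⟨q₁, hq₁, hq₁'⟩ := exists_rat_btwn (by linarith : t - ε < t)
  obtain ⟨q₂, hq₂, hq₂'⟩ := exists_rat_btwn (by linarith : t < t + ε)
  obtain ⟨i, hi⟩ : ∃ i : ℕ, Denumerable.ofNat (ℚ × ℚ) i = (q₁, q₂) :=
    ⟨_, Denumerable.ofNat_encode (q₁, q₂)⟩
  refine ⟨i, ?_, ?_⟩
  · rw [ival, hi]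
    exact ⟨hq₁', hq₂⟩
  · intro u hu hmem
    rw [ival, hi] at hmem
    obtain ⟨h1, h2⟩ := hmem
    have := hsep u hu
    have h3 : |u - t| < ε := abs_lt.2 ⟨by simp only at h1 h2 ⊢; linarith, by linarith⟩
    linarith

section Markers

variable {X : Type*} [MeasurableSpace X] (F : BorelFlow X) (C : Set X) (lam : ℝ)
  (f : X → ℝ) (K : ℕ)

/-- Candidates at stage `i`. -/
def cand (i : ℕ) : Set X :=
  {x | x ∈ C ∧ f x ∈ ival i ∧
    ∀ k : ℤ, k ≠ 0 → |k| ≤ (K : ℤ) → f (F.act x ((k : ℝ) * lam)) ∉ ival i}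

/-- Marker construction by stages. -/
def stage : ℕ → Set X
  | 0 => ∅
  | (i+1) => stage i ∪ (cand F C lam f K i ∩
      {x | ∀ k : ℤ, |k| ≤ (K : ℤ) → F.act x ((k : ℝ) * lam) ∉ stage i})

/-- The marker set. -/
def markers : Set X := ⋃ i, stage F C lam f K i

variable {F C lam f K}

theorem cand_subset (i : ℕ) : cand F C lam f K i ⊆ C := fun _ hx => hx.1

theorem stage_succ_subset (i : ℕ) : stage F C lam f K i ⊆ stage F C lam f K (i+1) :=
  Set.subset_union_left

theorem stage_mono : Monotone (stage F C lam f K) :=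
  monotone_nat_of_le_succ stage_succ_subset

theorem stage_subset_C : ∀ i, stage F C lam f K i ⊆ C := by
  intro i
  induction i with
  | zero => simp [stage]
  | succ i ih =>
      rw [stage]
      exact Set.union_subset ih (le_trans Set.inter_subset_left (cand_subset i))

theorem markers_subset_C : markers F C lam f K ⊆ C :=
  Set.iUnion_subset stage_subset_C

theorem cand_measurable (hC : MeasurableSet C) (hf : Measurable f) (i : ℕ) :
    MeasurableSet (cand F C lam f K i) := by
  have heq : cand F C lam f K i = (C ∩ f ⁻¹' ival i) ∩
      ⋂ k : ℤ, {x | k ≠ 0 → |k| ≤ (K : ℤ) → f (F.act x ((k : ℝ) * lam)) ∉ ival i} := by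
    ext x
    simp only [cand, Set.mem_setOf_eq, Set.mem_inter_iff, Set.mem_preimage, Set.mem_iInter]
    tauto
  rw [heq]
  refine ((hC.inter (hf measurableSet_Ioo)).inter (MeasurableSet.iInter fun k => ?_))
  by_cases hk : k ≠ 0 ∧ |k| ≤ (K : ℤ)
  · have : {x | k ≠ 0 → |k| ≤ (K : ℤ) → f (F.act x ((k : ℝ) * lam)) ∉ ival i} =
        (fun x => f (F.act x ((k : ℝ) * lam))) ⁻¹' (ival i)ᶜ := by
      ext x; simp [hk.1, hk.2]
    rw [this]
    exact (hf.comp (measurable_act_const F _)) measurableSet_Ioo.compl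
  · have : {x | k ≠ 0 → |k| ≤ (K : ℤ) → f (F.act x ((k : ℝ) * lam)) ∉ ival i} = Set.univ := by
      ext x
      simp only [Set.mem_setOf_eq, Set.mem_univ, iff_true]
      intro h1 h2
      exact absurd ⟨h1, h2⟩ hk
    rw [this]
    exact MeasurableSet.univ

theorem stage_measurable (hC : MeasurableSet C) (hf : Measurable f) :
    ∀ i, MeasurableSet (stage F C lam f K i) := by
  intro i
  induction i with
  | zero => simp [stage]
  | succ i ih =>
      rw [stage]
      have heq : {x : X | ∀ k : ℤ, |k| ≤ (K : ℤ) → F.act x ((k : ℝ) * lam) ∉ stage F C lam f K i}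
          = ⋂ k : ℤ, {x : X | |k| ≤ (K : ℤ) → F.act x ((k : ℝ) * lam) ∉ stage F C lam f K i} := by
        ext x; simp [Set.mem_iInter]
      rw [heq]
      refine ih.union ((cand_measurable hC hf i).inter (MeasurableSet.iInter fun k => ?_))
      by_cases hk : |k| ≤ (K : ℤ)
      · have : {x | |k| ≤ (K : ℤ) → F.act x ((k : ℝ) * lam) ∉ stage F C lam f K i} =
            (fun x => F.act x ((k : ℝ) * lam)) ⁻¹' (stage F C lam f K i)ᶜ := by
          ext x; simp [hk]
        rw [this]
        exact (measurable_act_const F _) ih.compl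
      · have : {x | |k| ≤ (K : ℤ) → F.act x ((k : ℝ) * lam) ∉ stage F C lam f K i} =
            Set.univ := by
          ext x; simp [hk]
        rw [this]
        exact MeasurableSet.univ

theorem markers_measurable (hC : MeasurableSet C) (hf : Measurable f) :
    MeasurableSet (markers F C lam f K) :=
  MeasurableSet.iUnion (stage_measurable hC hf)

theorem newstage {x : X} (hx : x ∈ markers F C lam f K) :
    ∃ i, x ∈ stage F C lam f K (i+1) ∧ x ∉ stage F C lam f K i := by
  have hne : {i : ℕ | x ∈ stage F C lam f K (i+1)}.Nonempty := by
    obtain ⟨j, hj⟩ := Set.mem_iUnion.1 hx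
    cases j with
    | zero => simp [stage] at hj
    | succ j => exact ⟨j, hj⟩
  refine ⟨sInf {i : ℕ | x ∈ stage F C lam f K (i+1)}, Nat.sInf_mem hne, ?_⟩
  cases h : sInf {i : ℕ | x ∈ stage F C lam f K (i+1)} with
  | zero => simp [stage]
  | succ i =>
      have : i ∉ {i : ℕ | x ∈ stage F C lam f K (i+1)} :=
        Nat.notMem_of_lt_sInf (by omega)
      exact this

theorem newstage_prop {x : X} {i : ℕ} (h1 : x ∈ stage F C lam f K (i+1))
    (h2 : x ∉ stage F C lam f K i) :
    x ∈ cand F C lam f K i ∧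
      ∀ k : ℤ, |k| ≤ (K : ℤ) → F.act x ((k : ℝ) * lam) ∉ stage F C lam f K i := by
  rw [stage] at h1
  rcases h1 with h | h
  · exact absurd h h2
  · exact ⟨h.1, h.2⟩

theorem act_int_cancel (F : BorelFlow X) (x : X) (k : ℤ) (lam : ℝ) :
    F.act (F.act x ((k : ℝ) * lam)) (((-k : ℤ) : ℝ) * lam) = x := by
  rw [F.act_add]
  have : (k : ℝ) * lam + ((-k : ℤ) : ℝ) * lam = 0 := by push_cast; ring
  rw [this, F.act_zero]

theorem markers_discrete (hfree : F.Free) (hlam : lam ≠ 0) {x : X}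
    (hx : x ∈ markers F C lam f K) (k : ℤ) (hk0 : k ≠ 0) (hkK : |k| ≤ (K : ℤ)) :
    F.act x ((k : ℝ) * lam) ∉ markers F C lam f K := by
  intro hy
  set y := F.act x ((k : ℝ) * lam) with hydef
  obtain ⟨i, hxi, hxi'⟩ := newstage hx
  obtain ⟨j, hyj, hyj'⟩ := newstage hy
  obtain ⟨hxc, hxcond⟩ := newstage_prop hxi hxi'
  obtain ⟨hyc, hycond⟩ := newstage_prop hyj hyj'
  rcases lt_trichotomy i j with h | h | h
  · -- x appeared earlier; y's condition at -k digs up x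
    have hyx : F.act y (((-k : ℤ) : ℝ) * lam) = x := act_int_cancel F x k lam
    have := hycond (-k) (by rwa [abs_neg])
    rw [hyx] at this
    exact this (stage_mono (by omega : i + 1 ≤ j) hxi)
  · -- same stage: contradiction with candidacy
    subst h
    exact (hxc.2.2 k hk0 hkK) hyc.2.1
  · -- y appeared earlier
    have := hxcond k hkK
    exact this (stage_mono (by omega : j + 1 ≤ i) hyj)

theorem markers_complete (hfree : F.Free) (hlam : lam ≠ 0) (hf : Function.Injective f)
    {x : X} (hx : x ∈ C) :
    ∃ k : ℤ, |k| ≤ (K : ℤ) ∧ F.act x ((k : ℝ) * lam) ∈ markers F C lam f K := by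
  classical
  set G : Finset ℝ := ((Finset.Icc (-(K : ℤ)) (K : ℤ)).erase 0).image
    (fun k : ℤ => f (F.act x ((k : ℝ) * lam))) with hG
  have hGne : ∀ u ∈ G, u ≠ f x := by
    intro u hu
    obtain ⟨k, hk, rfl⟩ := Finset.mem_image.1 hu
    rw [Finset.mem_erase, Finset.mem_Icc] at hk
    intro heq
    have hxy : F.act x ((k : ℝ) * lam) = x := hf heq
    have := hfree x _ hxy
    have hk0 : (k : ℝ) ≠ 0 := Int.cast_ne_zero.2 hk.1
    exact (mul_ne_zero hk0 hlam) this
  obtain ⟨i, hti, hGi⟩ := exists_ival (f x) G hGne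
  have hxc : x ∈ cand F C lam f K i := by
    refine ⟨hx, hti, ?_⟩
    intro k hk0 hkK
    apply hGi
    rw [hG]
    apply Finset.mem_image_of_mem
    rw [Finset.mem_erase, Finset.mem_Icc]
    exact ⟨hk0, abs_le.1 hkK⟩
  by_cases hst : x ∈ stage F C lam f K (i+1)
  · refine ⟨0, by simp, ?_⟩
    have h0 : ((0 : ℤ) : ℝ) * lam = 0 := by norm_num
    rw [h0, F.act_zero]
    exact Set.mem_iUnion.2 ⟨i+1, hst⟩
  · rw [stage] at hst
    have hni : x ∉ cand F C lam f K i ∩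
        {x | ∀ k : ℤ, |k| ≤ (K : ℤ) → F.act x ((k : ℝ) * lam) ∉ stage F C lam f K i} :=
      fun hmem => hst (Set.mem_union_right _ hmem)
    have hcond : ¬ (∀ k : ℤ, |k| ≤ (K : ℤ) →
        F.act x ((k : ℝ) * lam) ∉ stage F C lam f K i) :=
      fun hc => hni ⟨hxc, hc⟩
    push_neg at hcond
    obtain ⟨k, hkK, hkmem⟩ := hcond
    exact ⟨k, hkK, Set.mem_iUnion.2 ⟨i, hkmem⟩⟩

end Markers

end SRegAux
namespace SRegAux

open Set

variable {X : Type*} [MeasurableSpace X]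

theorem act_inj (F : BorelFlow X) (hfree : F.Free) (x : X) :
    Function.Injective (F.act x) := by
  intro s t hst
  have h1 : F.act (F.act x s) (-s) = x := by rw [F.act_add]; simp [F.act_zero]
  have h2 : F.act (F.act x t) (-s) = F.act x (t + -s) := F.act_add x t (-s)
  rw [hst, h2] at h1
  have := hfree x (t + -s) h1
  linarith [this]

theorem act_shift (F : BorelFlow X) (x : X) (lam : ℝ) (s t : ℤ) :
    F.act (F.act x ((s : ℝ) * lam)) ((t : ℝ) * lam) = F.act x (((s + t : ℤ) : ℝ) * lam) := by
  rw [F.act_add]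
  have h : (s : ℝ) * lam + (t : ℝ) * lam = ((s + t : ℤ) : ℝ) * lam := by push_cast; ring
  rw [h]

section NextDist

variable (F : BorelFlow X) (M : Set X) (lam : ℝ)

/-- Distance (in units of `lam`) to the next marker. -/
noncomputable def nextDist (x : X) : ℕ :=
  sInf {d : ℕ | 0 < d ∧ F.act x ((d : ℝ) * lam) ∈ M}

variable {F M lam}

theorem nextDist_spec {x : X} (hne : {d : ℕ | 0 < d ∧ F.act x ((d : ℝ) * lam) ∈ M}.Nonempty) :
    0 < nextDist F M lam x ∧ F.act x ((nextDist F M lam x : ℝ) * lam) ∈ M :=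
  Nat.sInf_mem hne

theorem nextDist_min {x : X} {e : ℕ} (h0 : 0 < e) (he : e < nextDist F M lam x) :
    F.act x ((e : ℝ) * lam) ∉ M := by
  intro hmem
  have hle : nextDist F M lam x ≤ e := Nat.sInf_le ⟨h0, hmem⟩
  omega

end NextDist

section Blocks

variable {X : Type*} [MeasurableSpace X] (F : BorelFlow X) (C : Set X) (lam : ℝ)
  (f : X → ℝ) (K : ℕ)

/-- The block of markers whose next-marker distance is exactly `d`. -/
def blk (d : ℕ) : Set X :=
  markers F C lam f K ∩ {x | 0 < d ∧ F.act x ((d : ℝ) * lam) ∈ markers F C lam f K} ∩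
    ⋂ e : ℕ, {x | e = 0 ∨ d ≤ e ∨ F.act x ((e : ℝ) * lam) ∉ markers F C lam f K}

variable {F C lam f K}

theorem blk_measurable (hC : MeasurableSet C) (hf : Measurable f) (d : ℕ) :
    MeasurableSet (blk F C lam f K d) := by
  have hM := markers_measurable (F := F) (lam := lam) (K := K) hC hf
  refine MeasurableSet.inter (MeasurableSet.inter hM ?_) (MeasurableSet.iInter fun e => ?_)
  · by_cases hd : 0 < d
    · have : {x : X | 0 < d ∧ F.act x ((d : ℝ) * lam) ∈ markers F C lam f K} =
          (fun x => F.act x ((d : ℝ) * lam)) ⁻¹' markers F C lam f K := by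
        ext x; simp [hd]
      rw [this]; exact (measurable_act_const F _) hM
    · have : {x : X | 0 < d ∧ F.act x ((d : ℝ) * lam) ∈ markers F C lam f K} = ∅ := by
        ext x; simp [hd]
      rw [this]; exact MeasurableSet.empty
  · by_cases he : e = 0 ∨ d ≤ e
    · have : {x : X | e = 0 ∨ d ≤ e ∨ F.act x ((e : ℝ) * lam) ∉ markers F C lam f K} =
          Set.univ := by
        ext x; simp only [Set.mem_setOf_eq, Set.mem_univ, iff_true]; tauto
      rw [this]; exact MeasurableSet.univ
    · push_neg at he
      have : {x : X | e = 0 ∨ d ≤ e ∨ F.act x ((e : ℝ) * lam) ∉ markers F C lam f K} =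
          (fun x => F.act x ((e : ℝ) * lam)) ⁻¹' (markers F C lam f K)ᶜ := by
        ext x
        simp only [Set.mem_setOf_eq, Set.mem_preimage, Set.mem_compl_iff]
        constructor
        · intro h
          rcases h with h | h | h
          · exact absurd h he.1
          · exact absurd h (by omega)
          · exact h
        · intro h; exact Or.inr (Or.inr h)
      rw [this]; exact (measurable_act_const F _) hM.compl

theorem mem_blk_iff {x : X}
    (hne : {e : ℕ | 0 < e ∧ F.act x ((e : ℝ) * lam) ∈ markers F C lam f K}.Nonempty) (d : ℕ) :
    x ∈ blk F C lam f K d ↔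
      x ∈ markers F C lam f K ∧ nextDist F (markers F C lam f K) lam x = d := by
  constructor
  · rintro ⟨⟨hxM, hd0, hdM⟩, hmin⟩
    refine ⟨hxM, ?_⟩
    have hdin : d ∈ {e : ℕ | 0 < e ∧ F.act x ((e : ℝ) * lam) ∈ markers F C lam f K} :=
      ⟨hd0, hdM⟩
    have hle : nextDist F (markers F C lam f K) lam x ≤ d := Nat.sInf_le hdin
    have hmem := nextDist_spec (F := F) (M := markers F C lam f K) (lam := lam) ⟨d, hdin⟩
    rcases eq_or_lt_of_le hle with h | h
    · exact h
    · exfalso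
      have hm := Set.mem_iInter.1 hmin (nextDist F (markers F C lam f K) lam x)
      simp only [Set.mem_setOf_eq] at hm
      rcases hm with h0 | h0 | h0
      · omega
      · omega
      · exact h0 hmem.2
  · rintro ⟨hxM, rfl⟩
    have hmem := nextDist_spec (F := F) (M := markers F C lam f K) (lam := lam) hne
    refine ⟨⟨hxM, hmem.1, hmem.2⟩, ?_⟩
    rw [Set.mem_iInter]
    intro e
    simp only [Set.mem_setOf_eq]
    by_cases he0 : e = 0
    · exact Or.inl he0
    · by_cases hed : nextDist F (markers F C lam f K) lam x ≤ e
      · exact Or.inr (Or.inl hed)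
      · exact Or.inr (Or.inr (nextDist_min (by omega) (by omega)))

end Blocks

/-- The `S`-regular cross section extracted from the markers. -/
noncomputable def Dset (F : BorelFlow X) (C : Set X) (S : Set ℝ) (lam : ℝ)
    (f : X → ℝ) (K : ℕ) : Set X :=
  ⋃ (d : ℕ) (j : ℤ) (_ : j ∈ offs S lam d) (_ : 0 ≤ j) (_ : j < (d : ℤ)),
    (fun y => F.act y (-((j : ℝ) * lam))) ⁻¹' (blk F C lam f K d)

theorem Dset_measurable {F : BorelFlow X} {C : Set X} {S : Set ℝ} {lam : ℝ}
    {f : X → ℝ} {K : ℕ} (hC : MeasurableSet C) (hf : Measurable f) :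
    MeasurableSet (Dset F C S lam f K) := by
  refine MeasurableSet.iUnion fun d => MeasurableSet.iUnion fun j => ?_
  refine MeasurableSet.iUnion fun _ => MeasurableSet.iUnion fun _ =>
    MeasurableSet.iUnion fun _ => ?_
  exact (measurable_act_const F _) (blk_measurable hC hf d)

theorem mem_Dset {F : BorelFlow X} {C : Set X} {S : Set ℝ} {lam : ℝ} {f : X → ℝ} {K : ℕ}
    {y : X} :
    y ∈ Dset F C S lam f K ↔ ∃ (d : ℕ) (j : ℤ), j ∈ offs S lam d ∧ 0 ≤ j ∧ j < (d : ℤ) ∧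
      F.act y (-((j : ℝ) * lam)) ∈ blk F C lam f K d := by
  simp only [Dset, Set.mem_iUnion, Set.mem_preimage]
  tauto

theorem mem_Dset' {F : BorelFlow X} {C : Set X} {S : Set ℝ} {lam : ℝ} {f : X → ℝ} {K : ℕ}
    {y : X} :
    y ∈ Dset F C S lam f K ↔ ∃ (x : X) (d : ℕ) (j : ℤ), j ∈ offs S lam d ∧ 0 ≤ j ∧
      j < (d : ℤ) ∧ x ∈ blk F C lam f K d ∧ y = F.act x ((j : ℝ) * lam) := by
  rw [mem_Dset]
  constructor
  · rintro ⟨d, j, hj, hj0, hjd, hmem⟩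
    refine ⟨F.act y (-((j : ℝ) * lam)), d, j, hj, hj0, hjd, hmem, ?_⟩
    rw [F.act_add]; simp [F.act_zero]
  · rintro ⟨x, d, j, hj, hj0, hjd, hmem, rfl⟩
    refine ⟨d, j, hj, hj0, hjd, ?_⟩
    rw [F.act_add]
    have : (j : ℝ) * lam + -((j : ℝ) * lam) = 0 := by ring
    rw [this, F.act_zero]
    exact hmem

end SRegAux
namespace SRegAux

open Set

theorem offs_bounds {S : Set ℝ} {lam : ℝ} {d : ℕ}
    (hl1 : ∀ y ∈ rep S lam d, (1 : ℤ) ≤ y) (hsum : (rep S lam d).sum = (d : ℤ))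
    {j : ℤ} (hj : j ∈ offs S lam d) : 0 ≤ j ∧ j ≤ (d : ℤ) := by
  obtain ⟨m, hm⟩ := hj
  simp only at hm
  constructor
  · rw [← hm]; exact ps_nonneg _ hl1 m
  · rw [← hm, ← hsum]; exact ps_le_sum _ hl1 m

theorem backward {X : Type*} [MeasurableSpace X] [StandardBorelSpace X]
    (F : BorelFlow X) (hfree : F.Free) {C : Set X} {S : Set ℝ} {lam : ℝ}
    (hlam : 0 < lam) (hpos : S ⊆ Set.Ioi (0 : ℝ))
    (hgen : AddSubgroup.closure S = AddSubgroup.zmultiples lam)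
    (h : F.SRegular C {lam}) : ∃ D : Set X, F.SRegular D S := by
  classical
  obtain ⟨⟨hmeas, -, hcover, ⟨c, hc, hlac⟩, hbi⟩, hgapC⟩ := h
  have hreg : ∀ x ∈ C, F.gap C x = lam := by
    intro x hx; have := hgapC x hx; simpa using this
  have hCcl : ∀ x ∈ C, ∀ k : ℤ, F.act x ((k : ℝ) * lam) ∈ C := by
    intro x hx k
    exact lam_closed F hc hlac hbi hreg hx k
  have hdiffC : ∀ x ∈ C, ∀ r : ℝ, F.act x r ∈ C → ∃ k : ℤ, r = (k : ℝ) * lam :=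
    diff_int F hc hlac (fun x hx => ⟨1, by rw [hreg x hx]; push_cast; ring⟩)
  obtain ⟨B, hB⟩ := exists_rep_bound hpos hlam hgen
  obtain ⟨f, hf⟩ := MeasureTheory.exists_measurableEmbedding_real X
  set K := B with hK
  set M := markers F C lam f K with hMdef
  set D := Dset F C S lam f K with hDdef
  have hMsubC : M ⊆ C := markers_subset_C
  have hlamne : lam ≠ 0 := ne_of_gt hlam
  have hMdisc : ∀ {x : X}, x ∈ M → ∀ k : ℤ, k ≠ 0 → |k| ≤ (K : ℤ) →
      F.act x ((k : ℝ) * lam) ∉ M :=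
    fun hx k hk0 hkK => markers_discrete hfree hlamne hx k hk0 hkK
  have hMcomp : ∀ x ∈ C, ∃ k : ℤ, |k| ≤ (K : ℤ) ∧ F.act x ((k : ℝ) * lam) ∈ M :=
    fun x hx => markers_complete hfree hlamne hf.injective hx
  -- next-marker distances are defined on C
  have hndne : ∀ x ∈ C, {d : ℕ | 0 < d ∧ F.act x ((d : ℝ) * lam) ∈ M}.Nonempty := by
    intro x hx
    obtain ⟨k, hkK, hkM⟩ := hMcomp (F.act x ((((K : ℤ) + 1 : ℤ) : ℝ) * lam))
      (hCcl x hx ((K : ℤ) + 1))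
    rw [act_shift] at hkM
    have habs := abs_le.1 hkK
    have h1 : (1 : ℤ) ≤ (K : ℤ) + 1 + k := by omega
    refine ⟨((K : ℤ) + 1 + k).toNat, by omega, ?_⟩
    have h2 : ((((K : ℤ) + 1 + k).toNat : ℤ)) = (K : ℤ) + 1 + k :=
      Int.toNat_of_nonneg (by omega)
    have hcast : ((((K : ℤ) + 1 + k).toNat : ℕ) : ℝ) = (((K : ℤ) + 1 + k : ℤ) : ℝ) := by
      exact_mod_cast h2
    rw [hcast]
    exact hkM
  have hndK : ∀ x ∈ M, (K : ℤ) < (nextDist F M lam x : ℤ) := by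
    intro x hx
    have hspec := nextDist_spec (hndne x (hMsubC hx))
    by_contra hcon
    push_neg at hcon
    have hnot := hMdisc hx ((nextDist F M lam x : ℕ) : ℤ)
      (by have := hspec.1; omega) (by rw [abs_of_nonneg (by omega)]; omega)
    apply hnot
    have h2 := hspec.2
    have hcst : (((nextDist F M lam x : ℕ) : ℤ) : ℝ) = ((nextDist F M lam x : ℕ) : ℝ) := by
      push_cast; ring
    rw [hcst]
    exact h2
  -- characterization of membership in D
  have hDchar : ∀ y : X, y ∈ D ↔ ∃ (x : X) (d : ℕ) (j : ℤ), x ∈ M ∧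
      nextDist F M lam x = d ∧ j ∈ offs S lam d ∧ 0 ≤ j ∧ j < (d : ℤ) ∧
      y = F.act x ((j : ℝ) * lam) := by
    intro y
    rw [hDdef, mem_Dset']
    constructor
    · rintro ⟨x, d, j, hj, hj0, hjd, hmem, rfl⟩
      have hxM : x ∈ markers F C lam f K := hmem.1.1
      have hiff := (mem_blk_iff (hndne x (hMsubC hxM)) d).1 hmem
      exact ⟨x, d, j, hiff.1, hiff.2, hj, hj0, hjd, rfl⟩
    · rintro ⟨x, d, j, hxM, hnd, hj, hj0, hjd, rfl⟩
      exact ⟨x, d, j, hj, hj0, hjd,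
        (mem_blk_iff (hndne x (hMsubC hxM)) d).2 ⟨hxM, hnd⟩, rfl⟩
  have hDsubC : D ⊆ C := by
    intro y hy
    obtain ⟨x, d, j, hxM, hnd, hj, hj0, hjd, rfl⟩ := (hDchar y).1 hy
    exact hCcl x (hMsubC hxM) j
  have hMD : M ⊆ D := by
    intro x hx
    have hspec := nextDist_spec (hndne x (hMsubC hx))
    refine (hDchar x).2 ⟨x, nextDist F M lam x, 0, hx, rfl, zero_mem_offs S lam _,
      le_refl 0, by exact_mod_cast hspec.1, ?_⟩
    have : ((0 : ℤ) : ℝ) * lam = 0 := by norm_num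
    rw [this, F.act_zero]
  -- the gaps of D lie in S
  have hgapD : ∀ y ∈ D, F.gap D y ∈ S := by
    intro y hy
    obtain ⟨x, d, j, hxM, hnd, hj, hj0, hjd, hyeq⟩ := (hDchar y).1 hy
    have hxC : x ∈ C := hMsubC hxM
    have hdK : (K : ℤ) < (d : ℤ) := by
      have := hndK x hxM; rw [hnd] at this; exact_mod_cast this
    obtain ⟨hrepT, hrepsum⟩ := rep_spec (S := S) (lam := lam) (hB d (by omega))
    have hl1 : ∀ z ∈ rep S lam d, (1 : ℤ) ≤ z := fun z hz => Tset_pos hpos hlam (hrepT z hz)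
    have hjlt : j < (rep S lam d).sum := by rw [hrepsum]; exact hjd
    obtain ⟨a, haL, hja, hmin⟩ := exists_next_off (rep S lam d) hl1 hj hjlt
    have haT : a ∈ Tset S lam := hrepT a haL
    have ha1 : (1 : ℤ) ≤ a := hl1 a haL
    have hja' : j + a ∈ offs S lam d := hja
    have hjad : j + a ≤ (d : ℤ) := (offs_bounds hl1 hrepsum hja').2
    have halam : 0 < (a : ℝ) * lam := by
      have : (1 : ℝ) ≤ (a : ℝ) := by exact_mod_cast ha1
      nlinarith
    -- next marker of x is in M
    have hdM : F.act x (((d : ℕ) : ℝ) * lam) ∈ M := by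
      have hspec := (nextDist_spec (hndne x hxC)).2
      rw [hnd] at hspec; exact hspec
    -- claim A : the point a steps further lies in D
    have hAmem : F.act y ((a : ℝ) * lam) ∈ D := by
      rw [hyeq, act_shift]
      rcases eq_or_lt_of_le hjad with heq | hlt
      · have hcast : (((j + a : ℤ)) : ℝ) = ((d : ℕ) : ℝ) := by rw [heq]; push_cast; ring
        rw [hcast]
        exact hMD hdM
      · exact (hDchar _).2 ⟨x, d, j + a, hxM, hnd, hja, by omega, hlt, rfl⟩
    -- claim B : any positive return time is at least a * lam
    have hBmin : ∀ r : ℝ, 0 < r → F.act y r ∈ D → (a : ℝ) * lam ≤ r := by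
      intro r hr hzD
      have hyC : y ∈ C := hDsubC hy
      have hzC : F.act y r ∈ C := hDsubC hzD
      obtain ⟨k, hk⟩ := hdiffC y hyC r hzC
      have hk1 : (1 : ℤ) ≤ k := by
        by_contra hcon
        push_neg at hcon
        have hk0 : (k : ℝ) ≤ 0 := by exact_mod_cast (by omega : k ≤ 0)
        nlinarith
      have hkr : (a : ℤ) ≤ k → (a : ℝ) * lam ≤ r := by
        intro hle
        have : (a : ℝ) ≤ (k : ℝ) := by exact_mod_cast hle
        rw [hk]
        nlinarith
      obtain ⟨x', d', j', hxM', hnd', hj', hj0', hjd', hzeq⟩ := (hDchar _).1 hzD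
      have hz2 : F.act y r = F.act x (((j + k : ℤ) : ℝ) * lam) := by
        rw [hyeq, hk, act_shift]
      have hkey : F.act x' ((j' : ℝ) * lam) = F.act x (((j + k : ℤ) : ℝ) * lam) := by
        rw [← hzeq, hz2]
      set p : ℤ := j + k + -j' with hp
      have hxp : x' = F.act x ((p : ℝ) * lam) := by
        have hcg := congrArg (fun w => F.act w (((-j' : ℤ) : ℝ) * lam)) hkey
        rw [act_int_cancel, act_shift] at hcg
        exact hcg
      rcases lt_trichotomy p 0 with hpneg | hpzero | hppos
      · -- impossible: a marker strictly before x' but within its block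
        exfalso
        have hxback : F.act x' (((-p : ℤ) : ℝ) * lam) = x := by
          rw [hxp]
          exact act_int_cancel F x p lam
        have hmem : (-p).toNat ∈ {e : ℕ | 0 < e ∧ F.act x' ((e : ℝ) * lam) ∈ M} := by
          constructor
          · omega
          · have hcast : (((-p).toNat : ℕ) : ℝ) = ((-p : ℤ) : ℝ) := by
              exact_mod_cast Int.toNat_of_nonneg (by omega : (0:ℤ) ≤ -p)
            rw [hcast, hxback]
            exact hxM
        have hle : nextDist F M lam x' ≤ (-p).toNat := Nat.sInf_le hmem
        rw [hnd'] at hle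
        omega
      · -- same block: minimality of the next offset
        have hxx : x' = x := by
          rw [hxp, hpzero]
          simp [F.act_zero]
        have hdd : d' = d := by rw [← hnd', hxx, hnd]
        have hj'jk : j' = j + k := by
          rw [hxx] at hkey
          have hcancel := act_inj F hfree x hkey
          have hr2 : (j' : ℝ) = ((j + k : ℤ) : ℝ) := mul_right_cancel₀ hlamne hcancel
          exact_mod_cast hr2
        rw [hdd] at hj'
        obtain ⟨m', hm'⟩ := hj'
        simp only at hm'
        have hgt : j < ((rep S lam d).take m').sum := by rw [hm']; omega
        have := hmin m' hgt
        rw [hm'] at this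
        exact hkr (by omega)
      · by_cases hpd : p < (d : ℤ)
        · -- impossible: a marker strictly inside the block of x
          exfalso
          have hnot := nextDist_min (F := F) (M := M) (lam := lam) (x := x)
            (e := p.toNat) (by omega) (by omega)
          apply hnot
          have hcast : ((p.toNat : ℕ) : ℝ) = ((p : ℤ) : ℝ) := by
            exact_mod_cast Int.toNat_of_nonneg (by omega : (0:ℤ) ≤ p)
          rw [hcast, ← hxp]
          exact hxM'
        · exact hkr (by omega)
    have hleast : IsLeast {r : ℝ | 0 < r ∧ F.act y r ∈ D} ((a : ℝ) * lam) :=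
      ⟨⟨halam, hAmem⟩, fun r hr => hBmin r hr.1 hr.2⟩
    have hgeq : F.gap D y = (a : ℝ) * lam := hleast.csInf_eq
    rw [hgeq]
    exact haT
  -- assemble the cross section
  refine ⟨D, ⟨⟨Dset_measurable hmeas hf.measurable, subset_univ _, ?_, ⟨lam, hlam, ?_⟩, ?_⟩,
    hgapD⟩⟩
  · -- covering
    intro x _
    obtain ⟨r, hr⟩ := hcover x (mem_univ x)
    obtain ⟨k, -, hkM⟩ := hMcomp _ hr
    refine ⟨r + (k : ℝ) * lam, ?_⟩
    have := hMD hkM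
    rw [F.act_add] at this
    exact this
  · -- lacunarity
    intro y hyD r hr hmem
    obtain ⟨k, hk⟩ := hdiffC y (hDsubC hyD) r (hDsubC hmem)
    have hk1 : (1 : ℤ) ≤ k := by
      by_contra hcon
      push_neg at hcon
      have hk0 : (k : ℝ) ≤ 0 := by exact_mod_cast (by omega : k ≤ 0)
      nlinarith
    have : (1 : ℝ) ≤ (k : ℝ) := by exact_mod_cast hk1
    nlinarith
  · -- bi-infiniteness
    intro y hyD
    have hyC : y ∈ C := hDsubC hyD
    constructor
    · rintro ⟨b, hb⟩
      obtain ⟨n, hn⟩ := exists_nat_gt ((K : ℝ) + b / lam)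
      obtain ⟨k, hkK, hkM⟩ := hMcomp (F.act y (((n : ℤ) : ℝ) * lam)) (hCcl y hyC n)
      rw [act_shift] at hkM
      have hmemD : F.act y ((((n : ℤ) + k : ℤ) : ℝ) * lam) ∈ D := hMD hkM
      have hble := hb hmemD
      have habs := abs_le.1 hkK
      have h1 : b / lam < (((n : ℤ) + k : ℤ) : ℝ) := by
        push_cast
        have : ((k : ℝ)) ≥ -(K : ℝ) := by exact_mod_cast habs.1
        linarith
      rw [div_lt_iff₀ hlam] at h1
      linarith
    · rintro ⟨b, hb⟩
      obtain ⟨n, hn⟩ := exists_nat_gt ((K : ℝ) - b / lam)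
      obtain ⟨k, hkK, hkM⟩ := hMcomp (F.act y (((-n : ℤ) : ℝ) * lam)) (hCcl y hyC (-n))
      rw [act_shift] at hkM
      have hmemD : F.act y ((((-n : ℤ) + k : ℤ) : ℝ) * lam) ∈ D := hMD hkM
      have hble := hb hmemD
      have habs := abs_le.1 hkK
      have h1 : (((-n : ℤ) + k : ℤ) : ℝ) < b / lam := by
        push_cast
        have : ((k : ℝ)) ≤ (K : ℝ) := by exact_mod_cast habs.2
        linarith
      rw [lt_div_iff₀ hlam] at h1
      linarith
  
end SRegAux
/-- Let `F` be a free Borel flow on a standard Borel space, and let `S` be a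
nonempty set of positive reals bounded away from zero whose generated subgroup equals `λℤ`
for some `λ > 0`.  Then `F` admits an `S`-regular cross section if and only if it admits a
`{λ}`-regular cross section. -/
theorem S_regular_iff_lambda_regular {X : Type*} [MeasurableSpace X] [StandardBorelSpace X]
    (F : BorelFlow X) (hfree : F.Free)
    (S : Set ℝ) (hne : S.Nonempty) (hpos : S ⊆ Set.Ioi (0 : ℝ))
    (hbdd : ∃ c > 0, ∀ s ∈ S, c ≤ s)
    (lam : ℝ) (hlam : 0 < lam)
    (hgen : AddSubgroup.closure S = AddSubgroup.zmultiples lam) :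
    (∃ C : Set X, F.SRegular C S) ↔ (∃ C : Set X, F.SRegular C {lam}) := by
  constructor
  · rintro ⟨C, hC⟩
    refine ⟨SRegAux.sat F C lam, SRegAux.forward F hlam hC ?_⟩
    intro s hs
    have hs' : s ∈ AddSubgroup.zmultiples lam := hgen ▸ AddSubgroup.subset_closure hs
    obtain ⟨k, hk⟩ := AddSubgroup.mem_zmultiples_iff.1 hs'
    exact ⟨k, by rw [← hk, zsmul_eq_mul]⟩
  · rintro ⟨C, hC⟩
    exact SRegAux.backward F hfree hlam hpos hgen hC
end

section
/- Let S ⊆ ℝ^{>0} be nonempty and let λ > 0 be such that the subgroup ⟨S⟩ of (ℝ, +) generated by S equals λℤ. Then there exists N ∈ ℕ such that nλ ∈ 𝒯(S) for every integer n ≥ N. -/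
/-- `𝒯(S)`: the additive semigroup generated by `S`, i.e. all finite sums
`s₁ + ⋯ + sₙ` with `n ≥ 1` and `sₖ ∈ S`. -/
def semigroupGen (S : Set ℝ) : Set ℝ :=
  { x | ∃ l : List ℝ, l ≠ [] ∧ (∀ s ∈ l, s ∈ S) ∧ l.sum = x }

/-- `A` is `ε`-dense in `I`: every open subinterval of `I` of length `ε` meets `A`. -/
def EpsDenseIn (A : Set ℝ) (ε : ℝ) (I : Set ℝ) : Prop :=
  ∀ x : ℝ, Set.Ioo x (x + ε) ⊆ I → (Set.Ioo x (x + ε) ∩ A).Nonempty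

/-- `A` is asymptotically dense in `ℝ`: for every `ε > 0` there is `K ≥ 0` such that
`A` is `ε`-dense in `[K, ∞)`. -/
def AsympDense (A : Set ℝ) : Prop :=
  ∀ ε > 0, ∃ K ≥ 0, EpsDenseIn A ε (Set.Ici K)

lemma semigroupGen_add {S : Set ℝ} {x y : ℝ} (hx : x ∈ semigroupGen S)
    (hy : y ∈ semigroupGen S) : x + y ∈ semigroupGen S := by
  obtain ⟨l₁, hl₁, hm₁, hs₁⟩ := hx
  obtain ⟨l₂, hl₂, hm₂, hs₂⟩ := hy
  refine ⟨l₁ ++ l₂, by simp [hl₁], ?_, by simp [hs₁, hs₂]⟩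
  intro s hs
  rcases List.mem_append.1 hs with h | h
  · exact hm₁ s h
  · exact hm₂ s h

lemma semigroupGen_nsmul {S : Set ℝ} {x : ℝ} (hx : x ∈ semigroupGen S) :
    ∀ k : ℕ, 1 ≤ k → (k : ℝ) * x ∈ semigroupGen S := by
  intro k hk
  induction k with
  | zero => omega
  | succ n ih =>
    rcases Nat.eq_zero_or_pos n with h0 | h0
    · subst h0; simpa using hx
    · have := semigroupGen_add (ih h0) hx
      have heq : ((n : ℝ) * x) + x = ((n + 1 : ℕ) : ℝ) * x := by push_cast; ring
      rwa [heq] at this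

lemma semigroupGen_pos {S : Set ℝ} (hpos : S ⊆ Set.Ioi (0 : ℝ)) {x : ℝ}
    (hx : x ∈ semigroupGen S) : 0 < x := by
  obtain ⟨l, hl, hm, hs⟩ := hx
  subst hs
  exact List.sum_pos l (fun s hs => hpos (hm s hs)) hl

lemma semigroupGen_mem_closure {S : Set ℝ} {x : ℝ} (hx : x ∈ semigroupGen S) :
    x ∈ AddSubgroup.closure S := by
  obtain ⟨l, hl, hm, hs⟩ := hx
  subst hs
  exact AddSubgroup.list_sum_mem _ (fun s hs => AddSubgroup.subset_closure (hm s hs))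

/-- If `S` is a nonempty set of positive reals with `⟨S⟩ = λℤ`, `λ > 0`,
then there is `N ∈ ℕ` such that `nλ ∈ 𝒯(S)` for all `n ≥ N`. -/
theorem multiples_eventually_in_semigroup (S : Set ℝ) (hne : S.Nonempty)
    (hpos : S ⊆ Set.Ioi (0 : ℝ)) (lam : ℝ) (hlam : 0 < lam)
    (hgen : AddSubgroup.closure S = AddSubgroup.zmultiples lam) :
    ∃ N : ℕ, ∀ n : ℕ, N ≤ n → (n : ℝ) * lam ∈ semigroupGen S := by
  -- every element of the semigroup is a positive natural multiple of lam
  have hmult : ∀ x ∈ semigroupGen S, ∃ p : ℕ, 1 ≤ p ∧ x = (p : ℝ) * lam := by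
    intro x hx
    have hxc : x ∈ AddSubgroup.zmultiples lam := by
      rw [← hgen]; exact semigroupGen_mem_closure hx
    obtain ⟨k, hk⟩ := AddSubgroup.mem_zmultiples_iff.1 hxc
    have hxpos : 0 < x := semigroupGen_pos hpos hx
    have hk' : (k : ℝ) * lam = x := by rw [← hk, zsmul_eq_mul]
    have hkpos : 0 < k := by
      by_contra h
      push_neg at h
      have : (k : ℝ) * lam ≤ 0 :=
        mul_nonpos_of_nonpos_of_nonneg (by exact_mod_cast h) hlam.le
      linarith
    refine ⟨k.toNat, by omega, ?_⟩
    rw [← hk']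
    congr 1
    exact_mod_cast (Int.toNat_of_nonneg hkpos.le).symm
  -- lam is a difference of two (possibly zero) semigroup elements
  have hlmem : lam ∈ AddSubgroup.closure S := by
    rw [hgen]; exact AddSubgroup.mem_zmultiples lam
  have hdiff : ∃ P N : ℝ, (P = 0 ∨ P ∈ semigroupGen S) ∧ (N = 0 ∨ N ∈ semigroupGen S) ∧
      lam = P - N := by
    refine AddSubgroup.closure_induction ?_ ?_ ?_ ?_ hlmem
    · intro x hx
      exact ⟨x, 0, Or.inr ⟨[x], by simp, by simpa using hx, by simp⟩, Or.inl rfl, by ring⟩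
    · exact ⟨0, 0, Or.inl rfl, Or.inl rfl, by ring⟩
    · rintro x y - - ⟨P₁, N₁, hP₁, hN₁, h₁⟩ ⟨P₂, N₂, hP₂, hN₂, h₂⟩
      refine ⟨P₁ + P₂, N₁ + N₂, ?_, ?_, by rw [h₁, h₂]; ring⟩
      · rcases hP₁ with h | h <;> rcases hP₂ with h' | h'
        · exact Or.inl (by rw [h, h']; ring)
        · exact Or.inr (by simpa [h] using h')
        · exact Or.inr (by simpa [h'] using h)
        · exact Or.inr (semigroupGen_add h h')
      · rcases hN₁ with h | h <;> rcases hN₂ with h' | h'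
        · exact Or.inl (by rw [h, h']; ring)
        · exact Or.inr (by simpa [h] using h')
        · exact Or.inr (by simpa [h'] using h)
        · exact Or.inr (semigroupGen_add h h')
    · rintro x - ⟨P, N, hP, hN, h⟩
      exact ⟨N, P, hN, hP, by rw [h]; ring⟩
  obtain ⟨P, N, hP, hN, hPN⟩ := hdiff
  rcases hN with hN0 | hNmem
  · -- N = 0 : lam itself is in the semigroup
    have hPlam : P = lam := by rw [hPN, hN0]; ring
    rcases hP with hP0 | hPmem
    · exfalso; rw [hP0] at hPlam; linarith
    · rw [hPlam] at hPmem
      refine ⟨1, fun n hn => ?_⟩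
      exact semigroupGen_nsmul hPmem n hn
  · -- N ∈ semigroup : N = q·lam, P = (q+1)·lam, both in semigroup
    obtain ⟨q, hq1, hqeq⟩ := hmult N hNmem
    have hPmem : P ∈ semigroupGen S := by
      rcases hP with hP0 | h
      · exfalso
        have : 0 < N := semigroupGen_pos hpos hNmem
        rw [hP0] at hPN; linarith
      · exact h
    have hPeq : P = ((q + 1 : ℕ) : ℝ) * lam := by
      push_cast
      rw [hqeq] at hPN
      linear_combination -(1:ℝ) * hPN
    refine ⟨q * q, fun n hn => ?_⟩
    set m := n / q with hm
    set j := n % q with hj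
    have hdm : q * m + j = n := Nat.div_add_mod n q
    have hjq : j < q := Nat.mod_lt n (by omega)
    have hmq : q ≤ m := (Nat.le_div_iff_mul_le (by omega)).2 (by omega)
    have hjm : j < m := lt_of_lt_of_le hjq hmq
    have key : (n : ℝ) * lam = ((m - j : ℕ) : ℝ) * N + (j : ℝ) * P := by
      rw [hqeq, hPeq]
      have : ((m - j : ℕ) : ℝ) = (m : ℝ) - j := by
        push_cast [Nat.cast_sub hjm.le]; ring
      rw [this]
      have hn' : (n : ℝ) = q * m + j := by exact_mod_cast congrArg (Nat.cast : ℕ → ℝ) hdm.symm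
      rw [hn']; push_cast; ring
    rw [key]
    rcases Nat.eq_zero_or_pos j with hj0 | hjpos
    · rw [hj0]
      simp only [Nat.cast_zero, zero_mul, add_zero, Nat.sub_zero]
      exact semigroupGen_nsmul hNmem m (by omega)
    · exact semigroupGen_add
        (semigroupGen_nsmul hNmem (m - j) (by omega))
        (semigroupGen_nsmul hPmem j (by omega))
end

section
/- Let T ⊆ ℝ be a nonempty countable set that is asymptotically dense in ℝ. Then there exists a Borel function ξ : ℝ^{>0} → ℝ such that x + ξ(x) ∈ T for every x > 0 and ξ(x) → 0 as x → +∞. -/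
/-- If `T` is a nonempty countable asymptotically dense subset of `ℝ`, then
there is a Borel function `ξ : ℝ^{>0} → ℝ` with `x + ξ(x) ∈ T` for all `x > 0` and
`ξ(x) → 0` as `x → +∞`. -/
theorem exists_borel_correction (T : Set ℝ) (hne : T.Nonempty) (hcount : T.Countable)
    (hdense : AsympDense T) :
    ∃ ξ : ℝ → ℝ, Measurable ξ ∧ (∀ x : ℝ, 0 < x → x + ξ x ∈ T) ∧
      Filter.Tendsto ξ Filter.atTop (nhds 0) := by
  classical
  obtain ⟨e, hT⟩ := hcount.exists_eq_range hne
  have hex : ∀ x : ℝ, ∃ n, dist x (e n) < Metric.infDist x T + Real.exp (-x) := by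
    intro x
    have h1 : Metric.infDist x T < Metric.infDist x T + Real.exp (-x) := by
      linarith [Real.exp_pos (-x)]
    rw [Metric.infDist_lt_iff hne] at h1
    obtain ⟨t, htT, hd⟩ := h1
    rw [hT] at htT; obtain ⟨n, rfl⟩ := htT
    exact ⟨n, hd⟩
  have hδm : Measurable fun x : ℝ => Metric.infDist x T + Real.exp (-x) :=
    ((Metric.continuous_infDist_pt T).add (Real.continuous_exp.comp continuous_neg)).measurable
  have hN : Measurable fun x : ℝ => Nat.find (hex x) := by
    apply measurable_find
    intro n
    exact measurableSet_lt (measurable_id.dist measurable_const) hδm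
  have hspec : ∀ x : ℝ, dist x (e (Nat.find (hex x))) <
      Metric.infDist x T + Real.exp (-x) := fun x => Nat.find_spec (hex x)
  refine ⟨fun x => e (Nat.find (hex x)) - x, ?_, ?_, ?_⟩
  · exact (measurable_from_top.comp hN).sub measurable_id
  · intro x _
    have : e (Nat.find (hex x)) ∈ T := hT.symm.subset (Set.mem_range_self _)
    simpa using this
  · have hinf : Filter.Tendsto (fun x => Metric.infDist x T) Filter.atTop (nhds 0) := by
      rw [Metric.tendsto_nhds]
      intro ε hε
      obtain ⟨K, hK0, hKd⟩ := hdense ε hε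
      filter_upwards [Filter.eventually_ge_atTop (K + ε)] with x hx
      have hsub : Set.Ioo (x - ε) (x - ε + ε) ⊆ Set.Ici K := by
        intro y hy
        rw [Set.mem_Ioo] at hy
        rw [Set.mem_Ici]
        linarith [hy.1]
      obtain ⟨t, ht, htT⟩ := hKd (x - ε) hsub
      rw [Set.mem_Ioo] at ht
      have hle : Metric.infDist x T ≤ dist x t := Metric.infDist_le_dist_of_mem htT
      have hd : dist x t < ε := by
        rw [Real.dist_eq, abs_lt]
        constructor <;> linarith [ht.1, ht.2]
      have h0 : (0:ℝ) ≤ Metric.infDist x T := Metric.infDist_nonneg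
      rw [Real.dist_eq, sub_zero, abs_of_nonneg h0]
      linarith
    have hg : Filter.Tendsto (fun x => Metric.infDist x T + Real.exp (-x))
        Filter.atTop (nhds 0) := by
      have := hinf.add Real.tendsto_exp_neg_atTop_nhds_zero
      simpa using this
    apply squeeze_zero_norm _ hg
    intro x
    have := hspec x
    rw [dist_comm, Real.dist_eq] at this
    exact le_of_lt this
end
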